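/- Let Q : ℝ³ → 𝒮₀ be twice continuously differentiable and let V : ℝ³ → 𝒮₀ be twice continuously differentiable with compact support. Then the function x ↦ (ℐ₂ − ℐ₃)(Q + V)(x) − (ℐ₂ − ℐ₃)(Q)(x) has compact support and ∫_{ℝ³} [ (ℐ₂ − ℐ₃)(Q + V) − (ℐ₂ − ℐ₃)(Q) ] dx = 0; that is, the null Lagrangian ℐ₂ − ℐ₃ is unchanged by compactly supported perturbations. -/

import Mathlib

open Real Matrix MeasureTheory

noncomputable section

/-- Partial derivative in direction `k` of a scalar function on `ℝ³`. -/
def pd3 (k : Fin 3) (f : (Fin 3 → ℝ) → ℝ) (x : Fin 3 → ℝ) : ℝ :=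
  fderiv ℝ f x (Pi.single k 1)

/-- The null-Lagrangian density `ℐ₂ − ℐ₃ = Σ Q_{ik,j}Q_{ij,k} − Σ Q_{ij,j}Q_{ik,k}`. -/
def I23 (Q : (Fin 3 → ℝ) → Matrix (Fin 3) (Fin 3) ℝ) (x : Fin 3 → ℝ) : ℝ :=
  (∑ i : Fin 3, ∑ j : Fin 3, ∑ k : Fin 3,
      pd3 j (fun z => Q z i k) x * pd3 k (fun z => Q z i j) x)
  - (∑ i : Fin 3, ∑ j : Fin 3, ∑ k : Fin 3,
      pd3 j (fun z => Q z i j) x * pd3 k (fun z => Q z i k) x)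

end

section AuxLemmas

private lemma contDiff_pd3 {f : (Fin 3 → ℝ) → ℝ} (hf : ContDiff ℝ 2 f) (m : Fin 3) :
    ContDiff ℝ 1 (pd3 m f) := by
  have h : ContDiff ℝ 1 (fderiv ℝ f) := hf.fderiv_right (by norm_num)
  exact h.clm_apply contDiff_const

private lemma pd3_comm {f : (Fin 3 → ℝ) → ℝ} (hf : ContDiff ℝ 2 f) (j k : Fin 3)
    (x : Fin 3 → ℝ) : pd3 j (pd3 k f) x = pd3 k (pd3 j f) x := by
  have hsym : IsSymmSndFDerivAt ℝ f x := hf.contDiffAt.isSymmSndFDerivAt (by simp [minSmoothness_of_isRCLikeNormedField])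
  have hdiff : DifferentiableAt ℝ (fderiv ℝ f) x :=
    ((hf.fderiv_right (by norm_num)).differentiable one_ne_zero).differentiableAt
  have key : ∀ v w : Fin 3 → ℝ,
      fderiv ℝ (fun z => fderiv ℝ f z w) x v = fderiv ℝ (fderiv ℝ f) x v w := by
    intro v w
    rw [fderiv_clm_apply hdiff (differentiableAt_const w)]
    simp
  show fderiv ℝ (fun z => fderiv ℝ f z (Pi.single k 1)) x (Pi.single j 1)
     = fderiv ℝ (fun z => fderiv ℝ f z (Pi.single j 1)) x (Pi.single k 1)
  rw [key, key]
  exact hsym _ _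

private lemma integrable_fderiv_apply {g : (Fin 3 → ℝ) → ℝ} (hg : ContDiff ℝ 1 g)
    (hs : HasCompactSupport g) (v : Fin 3 → ℝ) :
    Integrable (fun x => fderiv ℝ g x v) := by
  have hc : Continuous fun x => fderiv ℝ g x v :=
    (hg.continuous_fderiv one_ne_zero).clm_apply continuous_const
  exact hc.integrable_of_hasCompactSupport (hs.fderiv_apply ℝ v)

private lemma integral_fderiv_apply_zero {g : (Fin 3 → ℝ) → ℝ} (hg : ContDiff ℝ 1 g)
    (hs : HasCompactSupport g) (v : Fin 3 → ℝ) :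
    ∫ x : Fin 3 → ℝ, fderiv ℝ g x v = 0 := by
  have h1 : Integrable (fun x : Fin 3 → ℝ => fderiv ℝ (fun _ => (1:ℝ)) x v * g x) := by
    simpa using (integrable_zero (Fin 3 → ℝ) ℝ (volume : Measure (Fin 3 → ℝ)))
  have h2 : Integrable (fun x : Fin 3 → ℝ => (1:ℝ) * fderiv ℝ g x v) := by
    simpa using integrable_fderiv_apply hg hs v
  have h3 : Integrable (fun x : Fin 3 → ℝ => (1:ℝ) * g x) := by
    simpa using hg.continuous.integrable_of_hasCompactSupport hs
  have h := integral_mul_fderiv_eq_neg_fderiv_mul_of_integrable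
    (μ := (volume : Measure (Fin 3 → ℝ))) h1 h2 h3
    (fun x _ => differentiableAt_const (1:ℝ)) (fun x _ => (hg.differentiable one_ne_zero) x)
  simpa using h

private lemma fderiv_mul_apply3 {a b : (Fin 3 → ℝ) → ℝ} {x v : Fin 3 → ℝ}
    (ha : DifferentiableAt ℝ a x) (hb : DifferentiableAt ℝ b x) :
    fderiv ℝ (fun z => a z * b z) x v = a x * fderiv ℝ b x v + b x * fderiv ℝ a x v := by
  rw [fderiv_fun_mul ha hb]
  simp [smul_eq_mul]

private lemma divForm {f g : (Fin 3 → ℝ) → ℝ} (hf : ContDiff ℝ 2 f) (hg : ContDiff ℝ 2 g)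
    (j k : Fin 3) (x : Fin 3 → ℝ) :
    pd3 j f x * pd3 k g x - pd3 j g x * pd3 k f x
      = fderiv ℝ (fun z => f z * pd3 k g z) x (Pi.single j 1)
        - fderiv ℝ (fun z => f z * pd3 j g z) x (Pi.single k 1) := by
  have hfd : DifferentiableAt ℝ f x := (hf.differentiable (by norm_num)).differentiableAt
  have hk : DifferentiableAt ℝ (pd3 k g) x :=
    ((contDiff_pd3 hg k).differentiable one_ne_zero).differentiableAt
  have hj : DifferentiableAt ℝ (pd3 j g) x :=
    ((contDiff_pd3 hg j).differentiable one_ne_zero).differentiableAt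
  rw [fderiv_mul_apply3 hfd hk, fderiv_mul_apply3 hfd hj]
  have hc : fderiv ℝ (pd3 k g) x (Pi.single j 1) = fderiv ℝ (pd3 j g) x (Pi.single k 1) :=
    pd3_comm hg j k x
  rw [hc]
  show pd3 j f x * pd3 k g x - pd3 j g x * pd3 k f x
      = (f x * fderiv ℝ (pd3 j g) x (Pi.single k 1) + pd3 k g x * pd3 j f x)
        - (f x * fderiv ℝ (pd3 j g) x (Pi.single k 1) + pd3 j g x * pd3 k f x)
  ring

/-- The flux field `A_{ik} ∂_m A_{ij}` appearing in the divergence form of `ℐ₂ − ℐ₃`. -/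
private noncomputable def Fa (A : (Fin 3 → ℝ) → Matrix (Fin 3) (Fin 3) ℝ)
    (i j k m : Fin 3) : (Fin 3 → ℝ) → ℝ :=
  fun z => A z i k * pd3 m (fun w => A w i j) z

private lemma Fa_contDiff {A : (Fin 3 → ℝ) → Matrix (Fin 3) (Fin 3) ℝ}
    (hA : ∀ i j : Fin 3, ContDiff ℝ 2 fun x => A x i j) (i j k m : Fin 3) :
    ContDiff ℝ 1 (Fa A i j k m) :=
  ((hA i k).of_le (by norm_num)).mul (contDiff_pd3 (hA i j) m)

private lemma I23_eq_div {A : (Fin 3 → ℝ) → Matrix (Fin 3) (Fin 3) ℝ}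
    (hA : ∀ i j : Fin 3, ContDiff ℝ 2 fun x => A x i j) (x : Fin 3 → ℝ) :
    I23 A x = ∑ i : Fin 3, ∑ j : Fin 3, ∑ k : Fin 3,
      (fderiv ℝ (Fa A i j k k) x (Pi.single j 1)
        - fderiv ℝ (Fa A i j k j) x (Pi.single k 1)) := by
  rw [I23, ← Finset.sum_sub_distrib]
  refine Finset.sum_congr rfl fun i _ => ?_
  rw [← Finset.sum_sub_distrib]
  refine Finset.sum_congr rfl fun j _ => ?_
  rw [← Finset.sum_sub_distrib]
  refine Finset.sum_congr rfl fun k _ => ?_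
  exact divForm (hA i k) (hA i j) j k x

end AuxLemmas

/-- The null Lagrangian `ℐ₂ − ℐ₃` is unchanged by compactly supported
C² perturbations: the difference has compact support and integrates to zero over `ℝ³`. -/
theorem null_lagrangian_compact_perturbation
    (Q V : (Fin 3 → ℝ) → Matrix (Fin 3) (Fin 3) ℝ)
    (hQsym : ∀ x, (Q x).IsSymm ∧ (Q x).trace = 0)
    (hVsym : ∀ x, (V x).IsSymm ∧ (V x).trace = 0)
    (hQreg : ∀ i j : Fin 3, ContDiff ℝ 2 (fun x => Q x i j))
    (hVreg : ∀ i j : Fin 3, ContDiff ℝ 2 (fun x => V x i j))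
    (hVsupp : HasCompactSupport V) :
    HasCompactSupport (fun x => I23 (fun y => Q y + V y) x - I23 Q x) ∧
    ∫ x : Fin 3 → ℝ, (I23 (fun y => Q y + V y) x - I23 Q x) = 0 := by
  set P : (Fin 3 → ℝ) → Matrix (Fin 3) (Fin 3) ℝ := fun y => Q y + V y with hPdef
  have hPreg : ∀ i j : Fin 3, ContDiff ℝ 2 fun x => P x i j :=
    fun i j => (hQreg i j).add (hVreg i j)
  have hEv : ∀ x ∉ tsupport V, ∀ i j : Fin 3,
      (fun z => P z i j) =ᶠ[nhds x] (fun z => Q z i j) := by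
    intro x hx i j
    have h0 : V =ᶠ[nhds x] 0 := notMem_tsupport_iff_eventuallyEq.mp hx
    filter_upwards [h0] with z hz
    have hz0 : V z i j = 0 := by
      have : V z = 0 := by simpa using hz
      rw [this]; rfl
    show Q z i j + V z i j = Q z i j
    rw [hz0, add_zero]
  have hpd : ∀ x ∉ tsupport V, ∀ (i j m : Fin 3),
      pd3 m (fun z => P z i j) x = pd3 m (fun z => Q z i j) x := by
    intro x hx i j m
    show fderiv ℝ (fun z => P z i j) x (Pi.single m 1)
        = fderiv ℝ (fun z => Q z i j) x (Pi.single m 1)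
    rw [(hEv x hx i j).fderiv_eq]
  have hsupp1 : HasCompactSupport (fun x => I23 P x - I23 Q x) := by
    apply HasCompactSupport.intro hVsupp
    intro x hx
    simp only [I23, hpd x hx, sub_self]
  refine ⟨hsupp1, ?_⟩
  have hFd : ∀ i j k m : Fin 3, ContDiff ℝ 1 (fun z => Fa P i j k m z - Fa Q i j k m z) :=
    fun i j k m => (Fa_contDiff hPreg i j k m).sub (Fa_contDiff hQreg i j k m)
  have hFs : ∀ i j k m : Fin 3,
      HasCompactSupport (fun z => Fa P i j k m z - Fa Q i j k m z) := by
    intro i j k m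
    apply HasCompactSupport.intro hVsupp
    intro x hx
    have hV0 : V x = 0 := image_eq_zero_of_notMem_tsupport hx
    have h1 : P x i k = Q x i k := by
      show Q x i k + V x i k = Q x i k
      rw [show V x i k = 0 from by rw [hV0]; rfl, add_zero]
    simp only [Fa, h1, hpd x hx, sub_self]
  have hdP : ∀ (i j k m : Fin 3) (x : Fin 3 → ℝ), DifferentiableAt ℝ (Fa P i j k m) x :=
    fun i j k m x => ((Fa_contDiff hPreg i j k m).differentiable one_ne_zero).differentiableAt
  have hdQ : ∀ (i j k m : Fin 3) (x : Fin 3 → ℝ), DifferentiableAt ℝ (Fa Q i j k m) x :=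
    fun i j k m x => ((Fa_contDiff hQreg i j k m).differentiable one_ne_zero).differentiableAt
  have hIdent : (fun x : Fin 3 → ℝ => I23 P x - I23 Q x)
      = fun x => ∑ i : Fin 3, ∑ j : Fin 3, ∑ k : Fin 3,
          (fderiv ℝ (fun z => Fa P i j k k z - Fa Q i j k k z) x (Pi.single j 1)
            - fderiv ℝ (fun z => Fa P i j k j z - Fa Q i j k j z) x (Pi.single k 1)) := by
    funext x
    rw [I23_eq_div hPreg x, I23_eq_div hQreg x, ← Finset.sum_sub_distrib]
    refine Finset.sum_congr rfl fun i _ => ?_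
    rw [← Finset.sum_sub_distrib]
    refine Finset.sum_congr rfl fun j _ => ?_
    rw [← Finset.sum_sub_distrib]
    refine Finset.sum_congr rfl fun k _ => ?_
    rw [fderiv_fun_sub (hdP i j k k x) (hdQ i j k k x),
        fderiv_fun_sub (hdP i j k j x) (hdQ i j k j x)]
    simp only [ContinuousLinearMap.sub_apply]
    ring
  have hInt : ∀ i j k : Fin 3, Integrable (fun x =>
      fderiv ℝ (fun z => Fa P i j k k z - Fa Q i j k k z) x (Pi.single j 1)
        - fderiv ℝ (fun z => Fa P i j k j z - Fa Q i j k j z) x (Pi.single k 1)) :=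
    fun i j k => (integrable_fderiv_apply (hFd i j k k) (hFs i j k k) _).sub
      (integrable_fderiv_apply (hFd i j k j) (hFs i j k j) _)
  rw [hIdent]
  rw [integral_finset_sum _ (fun i _ => integrable_finset_sum _
    (fun j _ => integrable_finset_sum _ (fun k _ => hInt i j k)))]
  refine Finset.sum_eq_zero fun i _ => ?_
  rw [integral_finset_sum _ (fun j _ => integrable_finset_sum _ (fun k _ => hInt i j k))]
  refine Finset.sum_eq_zero fun j _ => ?_
  rw [integral_finset_sum _ (fun k _ => hInt i j k)]
  refine Finset.sum_eq_zero fun k _ => ?_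
  rw [integral_sub (integrable_fderiv_apply (hFd i j k k) (hFs i j k k) _)
      (integrable_fderiv_apply (hFd i j k j) (hFs i j k j) _)]
  rw [integral_fderiv_apply_zero (hFd i j k k) (hFs i j k k),
      integral_fderiv_apply_zero (hFd i j k j) (hFs i j k j), sub_zero]
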